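/- For every real c ≥ 0 there exists a constant C > 0 such that for every integer n ≥ 1 and every y ∈ ℝ: |Γ(n/2 + c + iy)| ≥ C·e^{-π|y|/2}·exp( ((n-1)/2)·log(n/2) − n/2 ), where Γ is the complex Gamma function. -/

import Mathlib

open Complex Real Filter Topology


-- Γ(x) ≥ 1 for x ≥ 2, via convexity of log Γ
lemma gamma_ge_one {x : ℝ} (hx : 2 ≤ x) : 1 ≤ Real.Gamma x := by
  rcases eq_or_lt_of_le hx with h | h
  · simp [← h, Real.Gamma_two]
  · have hc := Real.convexOn_log_Gamma
    have := hc.slope_mono_adjacent (x := (1:ℝ)) (z := x)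
      (by norm_num) (by simp; linarith) (by norm_num) h
    simp [Real.Gamma_one, Real.Gamma_two] at this
    have h2 : (0:ℝ) ≤ (Real.log (Real.Gamma x)) / (x - 2) := this
    have h3 : 0 ≤ Real.log (Real.Gamma x) := by
      have := div_nonneg_iff.mp h2
      rcases this with ⟨h4, _⟩ | ⟨_, h5⟩
      · exact h4
      · nlinarith
    calc (1:ℝ) = Real.exp 0 := by simp
    _ ≤ Real.exp (Real.log (Real.Gamma x)) := Real.exp_le_exp.mpr h3
    _ = Real.Gamma x := Real.exp_log (Real.Gamma_pos_of_pos (by linarith))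

-- Γ is monotone on [2, ∞)
lemma gamma_mono {a b : ℝ} (ha : 2 ≤ a) (hab : a ≤ b) : Real.Gamma a ≤ Real.Gamma b := by
  rcases eq_or_lt_of_le hab with h | h
  · rw [h]
  · have hc := Real.convexOn_log_Gamma
    have hs := hc.slope_mono_adjacent (x := (1:ℝ)) (y := a) (z := b)
      (by norm_num) (by simp; linarith) (by linarith) h
    simp only [Function.comp_apply, Real.Gamma_one, Real.log_one, sub_zero] at hs
    have h1 : 0 ≤ Real.log (Real.Gamma a) := by
      have := gamma_ge_one ha
      have hpos := Real.Gamma_pos_of_pos (show (0:ℝ) < a by linarith)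
      exact Real.log_nonneg this
    have h2 : 0 ≤ (Real.log (Real.Gamma b) - Real.log (Real.Gamma a)) / (b - a) := by
      calc (0:ℝ) ≤ Real.log (Real.Gamma a) / (a - 1) := div_nonneg h1 (by linarith)
      _ ≤ _ := hs
    have h3 : Real.log (Real.Gamma a) ≤ Real.log (Real.Gamma b) := by
      rcases div_nonneg_iff.mp h2 with ⟨h4, _⟩ | ⟨_, h5⟩
      · linarith
      · nlinarith
    calc Real.Gamma a = Real.exp (Real.log (Real.Gamma a)) :=
          (Real.exp_log (Real.Gamma_pos_of_pos (by linarith))).symm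
    _ ≤ Real.exp (Real.log (Real.Gamma b)) := Real.exp_le_exp.mpr h3
    _ = Real.Gamma b := Real.exp_log (Real.Gamma_pos_of_pos (by linarith))

-- Γ(x) ≥ 1/2 for x ≥ 1/2
lemma gamma_ge_half {x : ℝ} (hx : 1/2 ≤ x) : 1/2 ≤ Real.Gamma x := by
  have hxpos : (0:ℝ) < x := by linarith
  have hpos := Real.Gamma_pos_of_pos hxpos
  have hc := Real.convexOn_log_Gamma
  rcases lt_or_ge x 1 with h1 | h1
  · -- 1/2 ≤ x < 1 : slope(x,1) ≤ slope(1,2) = 0 so log Γ x ≥ 0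
    have hs := hc.slope_mono_adjacent (x := x) (y := (1:ℝ)) (z := (2:ℝ))
      (by simpa using hxpos) (by norm_num) h1 (by norm_num)
    simp only [Function.comp_apply, Real.Gamma_one, Real.Gamma_two, Real.log_one] at hs
    have : 0 ≤ Real.log (Real.Gamma x) := by
      norm_num at hs
      rcases div_nonpos_iff.mp hs with ⟨h4, h5⟩ | ⟨h4, _⟩
      · nlinarith
      · linarith
    have := Real.exp_le_exp.mpr this
    rw [Real.exp_log hpos] at this
    simp at this; linarith
  rcases lt_or_ge x 2 with h2 | h2
  · -- 1 ≤ x < 2 : slope(x,2) ≤ slope(2,3) = log 2, so log Γ x ≥ -(2-x) log 2 ≥ -log 2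
    have hs := hc.slope_mono_adjacent (x := x) (y := (2:ℝ)) (z := (3:ℝ))
      (by simpa using hxpos) (by norm_num) h2 (by norm_num)
    have h3 : Real.Gamma 3 = 2 := by
      have := Real.Gamma_nat_eq_factorial 2
      norm_num at this
      convert this using 2 <;> norm_num
    simp only [Function.comp_apply, Real.Gamma_two, h3, Real.log_one] at hs
    norm_num at hs
    -- hs : -log Γ x / (2 - x) ≤ log 2
    have h4 : -Real.log (Real.Gamma x) ≤ (2 - x) * Real.log 2 := by
      have := (div_le_iff₀ (by linarith : (0:ℝ) < 2 - x)).mp hs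
      linarith
    have h5 : -Real.log 2 ≤ Real.log (Real.Gamma x) := by
      have hl2 : 0 ≤ Real.log 2 := Real.log_nonneg (by norm_num)
      nlinarith
    have := Real.exp_le_exp.mpr h5
    rw [Real.exp_log hpos, Real.exp_neg, Real.exp_log (by norm_num : (0:ℝ) < 2)] at this
    linarith
  · linarith [gamma_ge_one h2]

-- Gautschi-type: Γ(s+1/2)² ≤ Γ(s) · Γ(s+1), by log-convexity
lemma gautschi {s : ℝ} (hs : 0 < s) :
    Real.Gamma (s + 1/2) ^ 2 ≤ Real.Gamma s * Real.Gamma (s + 1) := by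
  have hc := Real.convexOn_log_Gamma
  have key := hc.2 (x := s) (y := s + 1) (by simpa using hs) (by simp; linarith)
    (by norm_num : (0:ℝ) ≤ (1:ℝ)/2) (by norm_num : (0:ℝ) ≤ (1:ℝ)/2) (by norm_num)
  have harg : (1/2 : ℝ) • s + (1/2 : ℝ) • (s + 1) = s + 1/2 := by
    simp [smul_eq_mul]; ring
  rw [harg] at key
  simp only [Function.comp_apply, smul_eq_mul] at key
  have h1 := Real.Gamma_pos_of_pos hs
  have h2 := Real.Gamma_pos_of_pos (show (0:ℝ) < s + 1 by linarith)
  have h3 := Real.Gamma_pos_of_pos (show (0:ℝ) < s + 1/2 by linarith)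
  have key2 : 2 * Real.log (Real.Gamma (s + 1/2)) ≤
      Real.log (Real.Gamma s) + Real.log (Real.Gamma (s + 1)) := by linarith
  have := Real.exp_le_exp.mpr key2
  rw [Real.exp_add, Real.exp_log h1, Real.exp_log h2] at this
  calc Real.Gamma (s + 1/2) ^ 2
      = Real.exp (2 * Real.log (Real.Gamma (s + 1/2))) := by
        rw [show (2:ℝ) * Real.log (Real.Gamma (s + 1/2))
            = Real.log (Real.Gamma (s + 1/2) ^ 2) by
          rw [Real.log_pow]; push_cast; ring]
        rw [Real.exp_log (by positivity)]
  _ ≤ _ := this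

-- Stirling lower bound for factorials: √π √(2n) (n/e)^n ≤ n!
lemma stirling_lb (n : ℕ) (hn : 1 ≤ n) :
    Real.sqrt π * (Real.sqrt (2*n) * ((n:ℝ)/Real.exp 1)^n) ≤ (Nat.factorial n : ℝ) := by
  have h1 : Real.sqrt π ≤ Stirling.stirlingSeq n := by
    obtain ⟨m, rfl⟩ := Nat.exists_eq_add_of_le hn
    have ht : Tendsto (Stirling.stirlingSeq ∘ Nat.succ) atTop (𝓝 (Real.sqrt π)) :=
      Stirling.tendsto_stirlingSeq_sqrt_pi.comp (tendsto_add_atTop_nat 1)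
    have := Stirling.stirlingSeq'_antitone.le_of_tendsto ht m
    simpa [Nat.succ_eq_add_one, Nat.add_comm] using this
  have hd : 0 < Real.sqrt (2*n) * ((n:ℝ)/Real.exp 1)^n := by
    have : (0:ℝ) < n := by exact_mod_cast hn
    positivity
  have := (le_div_iff₀ hd).mp (by
    simpa [Stirling.stirlingSeq] using h1)
  linarith

-- (n+1)^n ≤ e * n^n
lemma pow_succ_le (n : ℕ) (hn : 1 ≤ n) : ((n:ℝ)+1)^n ≤ Real.exp 1 * (n:ℝ)^n := by
  have hnp : (0:ℝ) < n := by exact_mod_cast hn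
  have h1 : (n:ℝ) + 1 ≤ n * Real.exp (1/n) := by
    have := Real.add_one_le_exp (1/(n:ℝ))
    calc (n:ℝ) + 1 = n * (1 + 1/n) := by field_simp
    _ ≤ n * Real.exp (1/n) := by
        apply mul_le_mul_of_nonneg_left _ hnp.le
        linarith [Real.add_one_le_exp (1/(n:ℝ))]
  calc ((n:ℝ)+1)^n ≤ (n * Real.exp (1/n))^n := by
        apply pow_le_pow_left₀ (by positivity) h1
  _ = (n:ℝ)^n * Real.exp (1/n)^n := mul_pow _ _ _
  _ = (n:ℝ)^n * Real.exp (n * (1/n)) := by rw [← Real.exp_nat_mul]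
  _ = Real.exp 1 * (n:ℝ)^n := by
        rw [mul_one_div, div_self hnp.ne', mul_comm]

lemma gamma_half_nat_lb (n : ℕ) (hn : 4 ≤ n) :
    Real.exp (((n:ℝ)-1)/2 * Real.log ((n:ℝ)/2) - (n:ℝ)/2) ≤ Real.Gamma ((n:ℝ)/2) := by
  obtain ⟨k, rfl⟩ : ∃ k, n = k + 1 := ⟨n-1, by omega⟩
  have hk : 3 ≤ k := by omega
  have hkR : (3:ℝ) ≤ (k:ℝ) := by exact_mod_cast hk
  have hcast : ((k+1 : ℕ) : ℝ) = (k:ℝ) + 1 := by push_cast; ring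
  rw [hcast]
  set s : ℝ := ((k:ℝ)+1)/2 with hsdef
  have hspos : 0 < s := by rw [hsdef]; linarith
  have hs2 : 2 ≤ s := by rw [hsdef]; linarith
  have hΓpos : 0 < Real.Gamma s := Real.Gamma_pos_of_pos hspos
  -- duplication + Gautschi ⇒ (k! · 2^{-k} · √π)² ≤ Γ(s)⁴ · s
  have h2s : 2 * s = (k:ℝ) + 1 := by rw [hsdef]; ring
  have hΓn : Real.Gamma (2*s) = (Nat.factorial k : ℝ) := by
    rw [h2s]
    exact_mod_cast Real.Gamma_nat_eq_factorial k
  have hrp : (2:ℝ)^(1-2*s) = ((2:ℝ)^k)⁻¹ := by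
    rw [h2s, show (1:ℝ)-((k:ℝ)+1) = -(k:ℝ) by ring, Real.rpow_neg (by norm_num),
      Real.rpow_natCast]
  have hdup := Real.Gamma_mul_Gamma_add_half s
  rw [hΓn, hrp] at hdup
  have hga := gautschi hspos
  rw [Real.Gamma_add_one hspos.ne'] at hga
  have key4 : ((Nat.factorial k : ℝ) * ((2:ℝ)^k)⁻¹ * Real.sqrt π)^2
      ≤ Real.Gamma s ^ 4 * s := by
    rw [← hdup]
    calc (Real.Gamma s * Real.Gamma (s + 1/2))^2
        = Real.Gamma s ^ 2 * Real.Gamma (s + 1/2)^2 := by ring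
      _ ≤ Real.Gamma s ^ 2 * (Real.Gamma s * (s * Real.Gamma s)) := by
          apply mul_le_mul_of_nonneg_left hga (by positivity)
      _ = Real.Gamma s ^ 4 * s := by ring
  -- rewrite the target's 4th power
  apply le_of_pow_le_pow_left₀ (n := 4) (by norm_num) hΓpos.le
  have hE4 : Real.exp (((k:ℝ)+1-1)/2 * Real.log s - ((k:ℝ)+1)/2) ^ 4
      = s ^ (k*2) * Real.exp (-(2*(k:ℝ)+2)) := by
    rw [← Real.exp_nat_mul]
    rw [show (4:ℕ) * (((k:ℝ)+1-1)/2 * Real.log s - ((k:ℝ)+1)/2)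
        = ((k*2 : ℕ) : ℝ) * Real.log s + (-(2*(k:ℝ)+2)) by push_cast; ring]
    rw [Real.exp_add, ← Real.log_pow, Real.exp_log (by positivity)]
  rw [hE4]
  -- main numeric inequality
  have hstir := stirling_lb k (by omega)
  have hBnn : (0:ℝ) ≤ Real.sqrt π * (Real.sqrt (2*k) * ((k:ℝ)/Real.exp 1)^k) := by
    positivity
  have hfac2 : (Real.sqrt π * (Real.sqrt (2*k) * ((k:ℝ)/Real.exp 1)^k))^2
      ≤ (Nat.factorial k : ℝ)^2 := by
    apply pow_le_pow_left₀ hBnn hstir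
  have hB2 : (Real.sqrt π * (Real.sqrt (2*k) * ((k:ℝ)/Real.exp 1)^k))^2
      = π * (2*(k:ℝ)) * ((k:ℝ)^(k*2) * Real.exp (-(2*(k:ℝ)))) := by
    rw [mul_pow, mul_pow, Real.sq_sqrt Real.pi_pos.le,
      Real.sq_sqrt (by positivity : (0:ℝ) ≤ 2*(k:ℝ)), ← pow_mul, div_pow,
      ← Real.exp_nat_mul]
    rw [show ((k*2 : ℕ):ℝ) * 1 = 2*(k:ℝ) by push_cast; ring]
    rw [div_eq_mul_inv, ← Real.exp_neg]
    ring
  have hkpow : ((k:ℝ)+1)^(k*2) * Real.exp (-2) ≤ (k:ℝ)^(k*2) := by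
    have h1 := pow_succ_le k (by omega)
    have h2 : (((k:ℝ)+1)^k)^2 ≤ (Real.exp 1 * (k:ℝ)^k)^2 :=
      pow_le_pow_left₀ (by positivity) h1 2
    rw [← pow_mul, mul_pow, ← pow_mul, ← Real.exp_nat_mul] at h2
    have h3 : Real.exp ((2:ℕ) * (1:ℝ)) = Real.exp 2 := by norm_num
    rw [h3] at h2
    have := mul_le_mul_of_nonneg_right h2 (Real.exp_pos (-2)).le
    calc ((k:ℝ)+1)^(k*2) * Real.exp (-2) ≤ Real.exp 2 * (k:ℝ)^(k*2) * Real.exp (-2) := this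
      _ = (k:ℝ)^(k*2) := by rw [mul_comm (Real.exp 2), mul_assoc, ← Real.exp_add]; norm_num
  have hs_pow : s^(k*2) = ((k:ℝ)+1)^(k*2) * ((2:ℝ)^(k*2))⁻¹ := by
    rw [hsdef, div_pow, div_eq_mul_inv]
  have hsle : s ≤ 2*π^2*(k:ℝ) := by
    have hπ := Real.pi_gt_three
    have hπ2 : (9:ℝ) ≤ π^2 := by nlinarith
    have hknn : (0:ℝ) ≤ (k:ℝ) := by positivity
    have h9 : 9*(k:ℝ) ≤ π^2*(k:ℝ) := mul_le_mul_of_nonneg_right hπ2 hknn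
    rw [hsdef]; linarith
  apply le_of_mul_le_mul_right _ hspos
  calc s^(k*2) * Real.exp (-(2*(k:ℝ)+2)) * s
      ≤ s^(k*2) * Real.exp (-(2*(k:ℝ)+2)) * (2*π^2*(k:ℝ)) := by
        apply mul_le_mul_of_nonneg_left hsle (by positivity)
    _ = π * (2*(k:ℝ)) * (((k:ℝ)+1)^(k*2) * Real.exp (-2) * Real.exp (-(2*(k:ℝ)))) *
          ((2:ℝ)^(k*2))⁻¹ * π := by
        rw [hs_pow, show Real.exp (-(2*(k:ℝ)+2)) = Real.exp (-2) * Real.exp (-(2*(k:ℝ)))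
          by rw [← Real.exp_add]; ring_nf]
        ring
    _ ≤ π * (2*(k:ℝ)) * ((k:ℝ)^(k*2) * Real.exp (-(2*(k:ℝ)))) * ((2:ℝ)^(k*2))⁻¹ * π := by
        have : ((k:ℝ)+1)^(k*2) * Real.exp (-2) * Real.exp (-(2*(k:ℝ)))
            ≤ (k:ℝ)^(k*2) * Real.exp (-(2*(k:ℝ))) :=
          mul_le_mul_of_nonneg_right hkpow (Real.exp_pos _).le
        have hnn : (0:ℝ) ≤ π * (2*(k:ℝ)) := by positivity
        have := mul_le_mul_of_nonneg_left this hnn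
        apply mul_le_mul_of_nonneg_right _ Real.pi_pos.le
        apply mul_le_mul_of_nonneg_right _ (by positivity)
        exact this
    _ ≤ (Nat.factorial k : ℝ)^2 * ((2:ℝ)^(k*2))⁻¹ * π := by
        rw [← hB2]
        apply mul_le_mul_of_nonneg_right _ Real.pi_pos.le
        exact mul_le_mul_of_nonneg_right hfac2 (by positivity)
    _ = ((Nat.factorial k : ℝ) * ((2:ℝ)^k)⁻¹ * Real.sqrt π)^2 := by
        rw [mul_pow, mul_pow, Real.sq_sqrt Real.pi_pos.le, inv_pow, ← pow_mul]
    _ ≤ Real.Gamma s ^ 4 * s := key4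


lemma abs_gamma_half (y : ℝ) :
    (‖Complex.Gamma (1/2 + y*I)‖)^2 = π / Real.cosh (π*y) := by
  set z : ℂ := 1/2 + y*I with hz
  have h1 : (1:ℂ) - z = (starRingEnd ℂ) z := by
    rw [hz]; apply Complex.ext <;> simp <;> norm_num
  have href := Complex.Gamma_mul_Gamma_one_sub z
  rw [h1, Complex.Gamma_conj, Complex.mul_conj] at href
  have hsin : Complex.sin ((π:ℂ) * z) = (Real.cosh (π*y) : ℂ) := by
    rw [hz]
    rw [show (π:ℂ) * (1/2 + y*I) = (π:ℂ)/2 + ((π*y:ℝ):ℂ) * I by push_cast; ring]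
    rw [Complex.sin_add, Complex.sin_pi_div_two, Complex.cos_pi_div_two,
      Complex.cos_mul_I]
    simp [Complex.ofReal_cosh]
  rw [hsin] at href
  have hcosh : Real.cosh (π*y) ≠ 0 := (Real.cosh_pos _).ne'
  have : ((Complex.normSq (Complex.Gamma z) : ℝ) : ℂ) = ((π / Real.cosh (π*y) : ℝ) : ℂ) := by
    rw [href]; push_cast; ring
  have h2 := Complex.ofReal_injective this
  rw [← h2, Complex.sq_norm]

lemma sqrt_factor {s t y : ℝ} (hs : 0 < s) (hst : s ≤ t) :
    Real.sqrt (t^2 + y^2) * s ≤ Real.sqrt (s^2 + y^2) * t := by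
  have h1 : Real.sqrt (t^2 + y^2) * s = Real.sqrt ((t^2 + y^2) * s^2) := by
    rw [Real.sqrt_mul (by positivity), Real.sqrt_sq hs.le]
  have h2 : Real.sqrt (s^2 + y^2) * t = Real.sqrt ((s^2 + y^2) * t^2) := by
    rw [Real.sqrt_mul (by positivity), Real.sqrt_sq (hs.trans_le hst).le]
  rw [h1, h2]
  apply Real.sqrt_le_sqrt
  have hst2 : s^2 ≤ t^2 := by nlinarith
  nlinarith [mul_le_mul_of_nonneg_left hst2 (sq_nonneg y)]

lemma abs_gammaSeq_eq (z : ℂ) (n : ℕ) (hn : 1 ≤ n) :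
    ‖Complex.GammaSeq z n‖ =
      (n:ℝ) ^ z.re * (Nat.factorial n : ℝ) /
        ∏ j ∈ Finset.range (n+1), ‖z + j‖ := by
  rw [Complex.GammaSeq, norm_div, norm_mul,
    show ((n:ℕ):ℂ) ^ z = (((n:ℝ)):ℂ) ^ z by norm_cast,
    Complex.norm_cpow_eq_rpow_re_of_pos (by exact_mod_cast hn), norm_prod]
  simp

lemma gamma_ratio (x y : ℝ) (hx : 1/2 ≤ x) :
    ‖Complex.Gamma (1/2 + y*I)‖ * Real.Gamma x ≤
    ‖Complex.Gamma ((x:ℂ) + y*I)‖ * Real.sqrt π := by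
  have hxpos : (0:ℝ) < x := by linarith
  rw [← Real.Gamma_one_half_eq]
  have hf : Tendsto (fun n => ‖Complex.GammaSeq (1/2 + y*I) n‖ *
      Real.GammaSeq x n) atTop
      (𝓝 (‖Complex.Gamma (1/2 + y*I)‖ * Real.Gamma x)) :=
    ((continuous_norm.tendsto _).comp
      (Complex.GammaSeq_tendsto_Gamma _)).mul (Real.GammaSeq_tendsto_Gamma x)
  have hg : Tendsto (fun n => ‖Complex.GammaSeq ((x:ℂ) + y*I) n‖ *
      Real.GammaSeq (1/2) n) atTop
      (𝓝 (‖Complex.Gamma ((x:ℂ) + y*I)‖ * Real.Gamma (1/2))) :=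
    ((continuous_norm.tendsto _).comp
      (Complex.GammaSeq_tendsto_Gamma _)).mul (Real.GammaSeq_tendsto_Gamma (1/2))
  refine le_of_tendsto_of_tendsto hf hg ?_
  filter_upwards [eventually_ge_atTop 1] with n hn
  -- pointwise inequality
  have hre1 : ((1:ℂ)/2 + y*I).re = 1/2 := by simp
  have hre2 : (((x:ℝ):ℂ) + y*I).re = x := by simp
  rw [abs_gammaSeq_eq _ _ hn, abs_gammaSeq_eq _ _ hn, hre1, hre2,
    Real.GammaSeq, Real.GammaSeq]
  rw [div_mul_div_comm, div_mul_div_comm]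
  have hP2 : (0:ℝ) < ∏ j ∈ Finset.range (n+1), (x + j) := by
    apply Finset.prod_pos; intro j _; positivity
  have hP4 : (0:ℝ) < ∏ j ∈ Finset.range (n+1), ((1:ℝ)/2 + j) := by
    apply Finset.prod_pos; intro j _; positivity
  have hP1 : (0:ℝ) < ∏ j ∈ Finset.range (n+1), ‖(1:ℂ)/2 + y*I + j‖ := by
    apply Finset.prod_pos; intro j _
    apply norm_pos_iff.mpr
    intro h
    have := congrArg Complex.re h
    simp at this
    linarith [this]
  have hP3 : (0:ℝ) < ∏ j ∈ Finset.range (n+1), ‖((x:ℝ):ℂ) + y*I + j‖ := by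
    apply Finset.prod_pos; intro j _
    apply norm_pos_iff.mpr
    intro h
    have := congrArg Complex.re h
    simp at this
    linarith [this]
  have hprod : (∏ j ∈ Finset.range (n+1), ‖((x:ℝ):ℂ) + y*I + j‖) *
      (∏ j ∈ Finset.range (n+1), ((1:ℝ)/2 + j)) ≤
      (∏ j ∈ Finset.range (n+1), ‖(1:ℂ)/2 + y*I + j‖) *
      (∏ j ∈ Finset.range (n+1), (x + j)) := by
    rw [← Finset.prod_mul_distrib, ← Finset.prod_mul_distrib]
    apply Finset.prod_le_prod
    · intro j _; positivity
    · intro j _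
      have e1 : ((x:ℝ):ℂ) + y*I + j = (((x + j : ℝ)):ℂ) + (y:ℝ)*I := by push_cast; ring
      have e2 : ((1:ℂ)/2 + y*I + j) = (((1/2 + j : ℝ)):ℂ) + (y:ℝ)*I := by push_cast; ring
      rw [e1, e2, Complex.norm_add_mul_I, Complex.norm_add_mul_I]
      exact sqrt_factor (by positivity) (by linarith)
  have hnum : (0:ℝ) ≤ (n:ℝ) ^ (1/2:ℝ) * (Nat.factorial n : ℝ) * ((n:ℝ) ^ x * (Nat.factorial n : ℝ)) := by
    positivity
  calc (n:ℝ) ^ (1/2:ℝ) * (Nat.factorial n : ℝ) * ((n:ℝ) ^ x * (Nat.factorial n : ℝ)) /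
        ((∏ j ∈ Finset.range (n+1), ‖(1:ℂ)/2 + y*I + j‖) *
         (∏ j ∈ Finset.range (n+1), (x + j)))
      ≤ (n:ℝ) ^ (1/2:ℝ) * (Nat.factorial n : ℝ) * ((n:ℝ) ^ x * (Nat.factorial n : ℝ)) /
        ((∏ j ∈ Finset.range (n+1), ‖((x:ℝ):ℂ) + y*I + j‖) *
         (∏ j ∈ Finset.range (n+1), ((1:ℝ)/2 + j))) := by
        apply div_le_div_of_nonneg_left hnum (by positivity) hprod
    _ = (n:ℝ) ^ x * (Nat.factorial n : ℝ) * ((n:ℝ) ^ (1/2:ℝ) * (Nat.factorial n : ℝ)) /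
        ((∏ j ∈ Finset.range (n+1), ‖((x:ℝ):ℂ) + y*I + j‖) *
         (∏ j ∈ Finset.range (n+1), ((1:ℝ)/2 + j))) := by ring

lemma gamma_lower (x y : ℝ) (hx : 1/2 ≤ x) :
    Real.Gamma x * Real.exp (-(π * |y| / 2)) ≤
      ‖Complex.Gamma ((x:ℂ) + y*I)‖ := by
  have hπ := Real.pi_pos
  have hΓx := Real.Gamma_pos_of_pos (show (0:ℝ) < x by linarith)
  have hcosh_pos := Real.cosh_pos (π*y)
  have hcosh : Real.cosh (π*y) ≤ Real.exp (π*|y|) := by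
    rw [← Real.cosh_abs, show |π*y| = π*|y| by rw [abs_mul, abs_of_pos hπ], Real.cosh_eq]
    have h1 : Real.exp (-(π*|y|)) ≤ Real.exp (π*|y|) := by
      apply Real.exp_le_exp.mpr
      have : (0:ℝ) ≤ π*|y| := by positivity
      linarith
    linarith [Real.exp_pos (π*|y|)]
  have h0 : Real.sqrt π * Real.exp (-(π*|y|/2)) ≤
      ‖Complex.Gamma (1/2+y*I)‖ := by
    apply le_of_pow_le_pow_left₀ (n:=2) two_ne_zero (norm_nonneg _)
    rw [abs_gamma_half]
    rw [mul_pow, Real.sq_sqrt hπ.le, ← Real.exp_nat_mul,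
      show ((2:ℕ):ℝ) * (-(π*|y|/2)) = -(π*|y|) by push_cast; ring]
    rw [le_div_iff₀ hcosh_pos]
    have := mul_le_mul_of_nonneg_left hcosh (Real.exp_pos (-(π*|y|))).le
    rw [← Real.exp_add] at this
    simp only [neg_add_cancel, Real.exp_zero] at this
    nlinarith [Real.exp_pos (-(π*|y|))]
  have hsqrtπ : (0:ℝ) < Real.sqrt π := Real.sqrt_pos.mpr hπ
  have hr := gamma_ratio x y hx
  rw [← div_le_iff₀ hsqrtπ] at hr
  calc Real.Gamma x * Real.exp (-(π*|y|/2))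
      = (Real.sqrt π * Real.exp (-(π*|y|/2))) * Real.Gamma x / Real.sqrt π := by
        field_simp
    _ ≤ ‖Complex.Gamma (1/2+y*I)‖ * Real.Gamma x / Real.sqrt π := by
        gcongr
    _ ≤ _ := hr


/-- Lower bound for the Gamma function on the vertical lines `Re z = n/2 + c`:
for every `c ≥ 0` there is `C > 0` with
`|Γ(n/2 + c + iy)| ≥ C e^{-π|y|/2} exp(((n-1)/2) log(n/2) - n/2)` for all `n ≥ 1`, `y ∈ ℝ`. -/
theorem stmt_8 (c : ℝ) (hc : 0 ≤ c) :
    ∃ C > 0, ∀ n : ℕ, 1 ≤ n → ∀ y : ℝ,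
      C * Real.exp (-(Real.pi * |y| / 2)) *
        Real.exp (((n : ℝ) - 1) / 2 * Real.log ((n : ℝ) / 2) - (n : ℝ) / 2)
      ≤ ‖Complex.Gamma ((((n : ℝ) / 2 + c : ℝ) : ℂ) + y * Complex.I)‖ := by

  refine ⟨1/2, by norm_num, ?_⟩
  intro n hn y
  have hnR : (1:ℝ) ≤ (n:ℝ) := by exact_mod_cast hn
  have hx : (1:ℝ)/2 ≤ (n:ℝ)/2 + c := by linarith
  have hmain := gamma_lower ((n:ℝ)/2 + c) y hx
  have hexp : (0:ℝ) < Real.exp (-(π * |y| / 2)) := Real.exp_pos _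
  suffices h : 1/2 * Real.exp (((n:ℝ)-1)/2 * Real.log ((n:ℝ)/2) - (n:ℝ)/2) ≤
      Real.Gamma ((n:ℝ)/2 + c) by
    calc 1/2 * Real.exp (-(π * |y| / 2)) *
          Real.exp (((n:ℝ)-1)/2 * Real.log ((n:ℝ)/2) - (n:ℝ)/2)
        = (1/2 * Real.exp (((n:ℝ)-1)/2 * Real.log ((n:ℝ)/2) - (n:ℝ)/2)) *
          Real.exp (-(π * |y| / 2)) := by ring
      _ ≤ Real.Gamma ((n:ℝ)/2 + c) * Real.exp (-(π * |y| / 2)) :=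
          mul_le_mul_of_nonneg_right h hexp.le
      _ ≤ _ := hmain
  rcases lt_or_ge n 4 with h4 | h4
  · have hn3 : (n:ℝ) ≤ 3 := by
      have : n ≤ 3 := by omega
      exact_mod_cast this
    have hlog : Real.log ((n:ℝ)/2) ≤ (n:ℝ)/2 - 1 :=
      Real.log_le_sub_one_of_pos (by linarith)
    have hnn : (0:ℝ) ≤ ((n:ℝ)-1)/2 := by linarith
    have hE : ((n:ℝ)-1)/2 * Real.log ((n:ℝ)/2) - (n:ℝ)/2 ≤ 0 := by
      have := mul_le_mul_of_nonneg_left hlog hnn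
      nlinarith
    have hexp1 : Real.exp (((n:ℝ)-1)/2 * Real.log ((n:ℝ)/2) - (n:ℝ)/2) ≤ 1 := by
      calc Real.exp (((n:ℝ)-1)/2 * Real.log ((n:ℝ)/2) - (n:ℝ)/2) ≤ Real.exp 0 :=
            Real.exp_le_exp.mpr hE
        _ = 1 := Real.exp_zero
    have hhalf := gamma_ge_half hx
    nlinarith [Real.exp_pos (((n:ℝ)-1)/2 * Real.log ((n:ℝ)/2) - (n:ℝ)/2)]
  · have h1 := gamma_half_nat_lb n h4
    have hn4 : (4:ℝ) ≤ (n:ℝ) := by exact_mod_cast h4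
    have h2 : Real.Gamma ((n:ℝ)/2) ≤ Real.Gamma ((n:ℝ)/2 + c) :=
      gamma_mono (by linarith) (by linarith)
    nlinarith [Real.exp_pos (((n:ℝ)-1)/2 * Real.log ((n:ℝ)/2) - (n:ℝ)/2)]
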